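/- There exist a semigroup (φ_t) in 𝔻 and a non-regular backward orbit γ : [0, ∞) → 𝔻 of (φ_t) such that lim_{s → +∞} d_𝔻(γ(0), γ(s))/s² = 0. -/

import Mathlib

open Filter Set

/-- The inverse hyperbolic tangent. -/
noncomputable def arctanh (x : ℝ) : ℝ := (1 / 2) * Real.log ((1 + x) / (1 - x))

/-- The hyperbolic distance of the unit disc:
`d_𝔻(z, w) = arctanh |(z - w)/(1 - conj z · w)|`. -/
noncomputable def dD (z w : ℂ) : ℝ :=
  arctanh (‖(z - w) / (1 - (starRingEnd ℂ) z * w)‖)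

def unitDisc : Set ℂ := {z : ℂ | ‖z‖ < 1}


/-- A one-parameter semigroup of holomorphic self-maps of the unit disc
(which is not a group): `φ 0 = id`, the semigroup property holds for
nonnegative times, and `φ t → id` locally uniformly as `t → 0⁺`. -/
structure IsSemigroupD (φ : ℝ → ℂ → ℂ) : Prop where
  mapsTo : ∀ t : ℝ, 0 ≤ t → Set.MapsTo (φ t) unitDisc unitDisc
  holo : ∀ t : ℝ, 0 ≤ t → DifferentiableOn ℂ (φ t) unitDisc
  id0 : ∀ z ∈ unitDisc, φ 0 z = z
  comp : ∀ s t : ℝ, 0 ≤ s → 0 ≤ t → ∀ z ∈ unitDisc, φ (s + t) z = φ s (φ t z)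
  cont0 : TendstoLocallyUniformlyOn (fun t : ℝ => φ t) id (nhdsWithin 0 (Set.Ioi 0)) unitDisc
  notGroup : ∃ t : ℝ, 0 < t ∧ ¬ Set.BijOn (φ t) unitDisc unitDisc

/-- The backward invariant set `W = ⋂_{t ≥ 0} φ_t(𝔻)`. -/
def backwardInvSet (φ : ℝ → ℂ → ℂ) : Set ℂ :=
  ⋂ t ∈ Set.Ici (0 : ℝ), φ t '' unitDisc

/-- A petal: a nonempty connected component of the interior of the backward invariant set. -/
def IsPetal (φ : ℝ → ℂ → ℂ) (Δ : Set ℂ) : Prop :=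
  Δ.Nonempty ∧ ∃ z ∈ interior (backwardInvSet φ),
    Δ = connectedComponentIn (interior (backwardInvSet φ)) z


open Filter Set

namespace Stmt11Aux

/-! ### The semigroup `φ_t(z) = e^{-t} z / (1 - (1-e^{-t}) z)` and the backward
orbit `γ(t) = i e^t / (2 + i e^t)`. -/

noncomputable def phi (t : ℝ) (z : ℂ) : ℂ :=
  (Real.exp (-t) : ℂ) * z / (1 - (1 - (Real.exp (-t) : ℂ)) * z)

noncomputable def gam (t : ℝ) : ℂ :=
  Complex.I * (Real.exp t : ℂ) / (2 + Complex.I * (Real.exp t : ℂ))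

lemma mem_unitDisc {z : ℂ} : z ∈ unitDisc ↔ ‖z‖ < 1 := Iff.rfl

lemma two_add_I_ne (x : ℝ) : (2 + Complex.I * (x : ℂ)) ≠ 0 := by
  intro h
  have := congrArg Complex.re h
  simp at this

lemma two_sub_I_ne (x : ℝ) : (2 - Complex.I * (x : ℂ)) ≠ 0 := by
  intro h
  have := congrArg Complex.re h
  simp at this

lemma abs_two_add_I (x : ℝ) : ‖2 + Complex.I * (x : ℂ)‖ = Real.sqrt (4 + x ^ 2) := by
  rw [Complex.norm_def, Complex.normSq_apply]
  norm_num
  ring_nf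

lemma abs_two_sub_I (x : ℝ) : ‖2 - Complex.I * (x : ℂ)‖ = Real.sqrt (4 + x ^ 2) := by
  rw [Complex.norm_def, Complex.normSq_apply]
  norm_num
  ring_nf

lemma abs_one_sub_exp {t : ℝ} (ht : 0 ≤ t) :
    ‖1 - (Real.exp (-t) : ℂ)‖ = 1 - Real.exp (-t) := by
  have h : ((1 - Real.exp (-t) : ℝ) : ℂ) = 1 - (Real.exp (-t) : ℂ) := by push_cast; ring
  have h1 := Real.exp_le_one_iff.mpr (neg_nonpos.mpr ht)
  rw [← h, Complex.norm_real, Real.norm_eq_abs]; exact abs_of_nonneg (by linarith)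

lemma denom_ne_zero {t : ℝ} (ht : 0 ≤ t) {z : ℂ} (hz : ‖z‖ < 1) :
    (1 : ℂ) - (1 - (Real.exp (-t) : ℂ)) * z ≠ 0 := by
  intro h
  have h1 : (1 - (Real.exp (-t) : ℂ)) * z = 1 := by linear_combination -h
  have h2 : ‖(1 - (Real.exp (-t) : ℂ)) * z‖ < 1 := by
    rw [norm_mul, abs_one_sub_exp ht]
    have h3 : 0 ≤ 1 - Real.exp (-t) := by
      have := Real.exp_le_one_iff.mpr (neg_nonpos.mpr ht)
      linarith
    calc (1 - Real.exp (-t)) * ‖z‖ ≤ 1 * ‖z‖ := by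
          apply mul_le_mul_of_nonneg_right _ (norm_nonneg z)
          have := Real.exp_pos (-t); linarith
      _ < 1 := by simpa using hz
  rw [h1] at h2
  simp at h2

lemma phi_mem {t : ℝ} (ht : 0 ≤ t) {z : ℂ} (hz : ‖z‖ < 1) :
    ‖phi t z‖ < 1 := by
  have hexp := Real.exp_pos (-t)
  have hexp1 := Real.exp_le_one_iff.mpr (neg_nonpos.mpr ht)
  have habsz := norm_nonneg z
  unfold phi
  rw [norm_div, norm_mul, Complex.norm_real, Real.norm_eq_abs, abs_of_pos hexp]
  have hcz : ‖(1 - (Real.exp (-t) : ℂ)) * z‖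
      = (1 - Real.exp (-t)) * ‖z‖ := by
    rw [norm_mul, abs_one_sub_exp ht]
  have hD : 1 - (1 - Real.exp (-t)) * ‖z‖ ≤
      ‖1 - (1 - (Real.exp (-t) : ℂ)) * z‖ := by
    have := norm_sub_norm_le 1 ((1 - (Real.exp (-t) : ℂ)) * z)
    rwa [norm_one, hcz] at this
  have hDpos : 0 < ‖1 - (1 - (Real.exp (-t) : ℂ)) * z‖ := by
    nlinarith
  rw [div_lt_one hDpos]
  nlinarith

lemma gam_mem (t : ℝ) : ‖gam t‖ < 1 := by
  have hE := Real.exp_pos t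
  unfold gam
  rw [norm_div, norm_mul, Complex.norm_I, Complex.norm_real, Real.norm_eq_abs, abs_of_pos hE, one_mul,
    abs_two_add_I, div_lt_one (by positivity)]
  nlinarith [Real.sq_sqrt (by positivity : (0:ℝ) ≤ 4 + Real.exp t ^ 2),
    Real.sqrt_nonneg (4 + Real.exp t ^ 2)]

lemma gam_cont : Continuous gam := by
  unfold gam
  apply Continuous.div
  · continuity
  · continuity
  · intro t; exact two_add_I_ne _

lemma div_trick (a b n d : ℂ) (hd : d ≠ 0) (h : d - b * n ≠ 0) :
    a * (n / d) / (1 - b * (n / d)) = a * n / (d - b * n) := by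
  have h1 : 1 - b * (n / d) = (d - b * n) / d := by field_simp
  rw [h1]
  field_simp

lemma phi_id0 (z : ℂ) : phi 0 z = z := by
  unfold phi; norm_num

lemma phi_comp {s t : ℝ} (hs : 0 ≤ s) (ht : 0 ≤ t) {z : ℂ} (hz : ‖z‖ < 1) :
    phi (s + t) z = phi s (phi t z) := by
  have h1 := denom_ne_zero ht hz
  have h3 := denom_ne_zero (by linarith : (0:ℝ) ≤ s + t) hz
  have hE : Real.exp (-(s + t)) = Real.exp (-s) * Real.exp (-t) := by
    rw [← Real.exp_add]; ring_nf
  have hden : (1 - (1 - (Real.exp (-t) : ℂ)) * z) -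
      (1 - (Real.exp (-s) : ℂ)) * ((Real.exp (-t) : ℂ) * z) ≠ 0 := by
    have h : (1 - (1 - (Real.exp (-t) : ℂ)) * z) -
        (1 - (Real.exp (-s) : ℂ)) * ((Real.exp (-t) : ℂ) * z)
        = 1 - (1 - (Real.exp (-(s + t)) : ℂ)) * z := by
      rw [hE]; push_cast; ring
    rw [h]; exact h3
  unfold phi
  rw [div_trick _ _ _ _ h1 hden, hE]
  congr 1 <;> push_cast <;> ring

lemma phi_gam {s t : ℝ} (hs : 0 ≤ s) : phi s (gam t) = gam (t - s) := by
  have h1 := two_add_I_ne (Real.exp t)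
  have hE : Real.exp (t - s) = Real.exp (-s) * Real.exp t := by
    rw [← Real.exp_add]; ring_nf
  have hden : (2 + Complex.I * (Real.exp t : ℂ)) -
      (1 - (Real.exp (-s) : ℂ)) * (Complex.I * (Real.exp t : ℂ)) ≠ 0 := by
    have h : (2 + Complex.I * (Real.exp t : ℂ)) -
        (1 - (Real.exp (-s) : ℂ)) * (Complex.I * (Real.exp t : ℂ))
        = 2 + Complex.I * ((Real.exp (t - s) : ℝ) : ℂ) := by
      rw [hE]; push_cast; ring
    rw [h]; exact two_add_I_ne _
  unfold phi gam
  rw [div_trick _ _ _ _ h1 hden, hE]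
  congr 1 <;> push_cast <;> ring

lemma phi_holo {t : ℝ} (ht : 0 ≤ t) :
    DifferentiableOn ℂ (phi t) {z : ℂ | ‖z‖ < 1} := by
  unfold phi
  apply DifferentiableOn.div
  · exact (differentiable_const _).mul differentiable_id |>.differentiableOn
  · exact ((differentiable_const _).sub
      ((differentiable_const _).mul differentiable_id)).differentiableOn
  · intro z hz; exact denom_ne_zero ht hz

lemma phi_notBij :
    ¬ Set.BijOn (phi 1) {z : ℂ | ‖z‖ < 1} {z : ℂ | ‖z‖ < 1} := by
  intro h
  have hmem : (-(Real.exp (-1) : ℂ)) ∈ {z : ℂ | ‖z‖ < 1} := by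
    simp only [Set.mem_setOf_eq, norm_neg, Complex.norm_real, Real.norm_eq_abs]
    rw [abs_of_pos (Real.exp_pos _)]
    exact Real.exp_lt_one_iff.mpr (by norm_num)
  obtain ⟨z, hz, hfz⟩ := h.surjOn hmem
  simp only [Set.mem_setOf_eq] at hz
  have hd := denom_ne_zero (by norm_num : (0:ℝ) ≤ 1) hz
  have ha : (Real.exp (-1) : ℂ) ≠ 0 := by
    simp only [ne_eq, Complex.ofReal_eq_zero]
    exact (Real.exp_pos (-1)).ne'
  unfold phi at hfz
  rw [div_eq_iff hd] at hfz
  have key : (Real.exp (-1) : ℂ) * z = -1 := by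
    have h2 : (Real.exp (-1) : ℂ) * ((Real.exp (-1) : ℂ) * z + 1) = 0 := by
      linear_combination hfz
    rcases mul_eq_zero.mp h2 with h | h
    · exact absurd h ha
    · linear_combination h
  have habs : ‖(Real.exp (-1) : ℂ) * z‖ = 1 := by rw [key]; simp
  rw [norm_mul, Complex.norm_real, Real.norm_eq_abs, abs_of_pos (Real.exp_pos _)] at habs
  have h1 : Real.exp (-1) < 1 := Real.exp_lt_one_iff.mpr (by norm_num)
  nlinarith [norm_nonneg z, Real.exp_pos (-1)]

lemma phi_cont0 : TendstoLocallyUniformlyOn (fun t : ℝ => phi t) id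
    (nhdsWithin 0 (Set.Ioi 0)) {z : ℂ | ‖z‖ < 1} := by
  have hopen : IsOpen {z : ℂ | ‖z‖ < 1} :=
    isOpen_lt continuous_norm continuous_const
  rw [tendstoLocallyUniformlyOn_iff_forall_isCompact hopen]
  intro K hK hKc
  rw [Metric.tendstoUniformlyOn_iff]
  intro ε hε
  rcases K.eq_empty_or_nonempty with rfl | hne
  · filter_upwards with t x hx using absurd hx (Set.notMem_empty x)
  obtain ⟨z0, hz0K, hz0max⟩ := hKc.exists_isMaxOn hne continuous_norm.continuousOn
  set r : ℝ := ‖z0‖ with hr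
  have hr1 : r < 1 := hK hz0K
  have hr0 : 0 ≤ r := norm_nonneg z0
  have hrb : ∀ x ∈ K, ‖x‖ ≤ r := fun x hx => hz0max hx
  set ε' : ℝ := ε * (1 - r) / 2 with hε'
  have hε'pos : 0 < ε' := by
    have h1r : 0 < 1 - r := by linarith
    positivity
  have htend : Tendsto (fun t : ℝ => 1 - Real.exp (-t))
      (nhdsWithin 0 (Set.Ioi 0)) (nhds 0) := by
    have hcont : Continuous (fun t : ℝ => 1 - Real.exp (-t)) := by continuity
    have h := hcont.tendsto 0
    norm_num at h
    exact h.mono_left nhdsWithin_le_nhds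
  have hev1 : ∀ᶠ t in nhdsWithin (0:ℝ) (Set.Ioi 0), 1 - Real.exp (-t) < ε' :=
    htend.eventually_lt_const hε'pos
  have hev2 : ∀ᶠ t in nhdsWithin (0:ℝ) (Set.Ioi 0), (0:ℝ) < t :=
    eventually_mem_nhdsWithin
  filter_upwards [hev1, hev2] with t hc ht x hx
  have hxd : ‖x‖ < 1 := hK hx
  have ht0 : (0:ℝ) ≤ t := le_of_lt ht
  have hd := denom_ne_zero ht0 hxd
  have hkey : (id x : ℂ) - phi t x =
      (1 - (Real.exp (-t) : ℂ)) * x * (1 - x) / (1 - (1 - (Real.exp (-t) : ℂ)) * x) := by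
    unfold phi
    simp only [id_eq]
    rw [eq_div_iff hd, sub_mul, div_mul_cancel₀ _ hd]
    ring
  rw [Complex.dist_eq, hkey, norm_div, norm_mul, norm_mul, abs_one_sub_exp ht0]
  have hc0 : 0 ≤ 1 - Real.exp (-t) := by
    have := Real.exp_le_one_iff.mpr (neg_nonpos.mpr ht0); linarith
  have hb1 : ‖1 - x‖ ≤ 2 := by
    calc ‖1 - x‖ ≤ ‖(1:ℂ)‖ + ‖x‖ := norm_sub_le _ _
      _ ≤ 2 := by rw [norm_one]; linarith
  have hb2 : 1 - r ≤ ‖1 - (1 - (Real.exp (-t) : ℂ)) * x‖ := by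
    have h := norm_sub_norm_le 1 ((1 - (Real.exp (-t) : ℂ)) * x)
    rw [norm_one, norm_mul, abs_one_sub_exp ht0] at h
    have hle : (1 - Real.exp (-t)) * ‖x‖ ≤ r := by
      calc (1 - Real.exp (-t)) * ‖x‖ ≤ 1 * ‖x‖ := by
            apply mul_le_mul_of_nonneg_right _ (norm_nonneg x)
            have := Real.exp_pos (-t); linarith
        _ ≤ r := by rw [one_mul]; exact hrb x hx
    linarith
  have hb2' : 0 < ‖1 - (1 - (Real.exp (-t) : ℂ)) * x‖ := by linarith
  rw [div_lt_iff₀ hb2']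
  calc (1 - Real.exp (-t)) * ‖x‖ * ‖1 - x‖
      ≤ (1 - Real.exp (-t)) * 1 * 2 := by
        apply mul_le_mul (by nlinarith [norm_nonneg x, hxd]) hb1
          (norm_nonneg _) (by nlinarith)
    _ = 2 * (1 - Real.exp (-t)) := by ring
    _ < 2 * ε' := by linarith
    _ = ε * (1 - r) := by rw [hε']; ring
    _ ≤ ε * ‖1 - (1 - (Real.exp (-t) : ℂ)) * x‖ := by
        apply mul_le_mul_of_nonneg_left hb2 (le_of_lt hε)

lemma gam_sub (t u : ℝ) : gam t - gam u =
    2 * Complex.I * ((Real.exp t : ℂ) - (Real.exp u : ℂ)) /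
      ((2 + Complex.I * (Real.exp t : ℂ)) * (2 + Complex.I * (Real.exp u : ℂ))) := by
  unfold gam
  rw [div_sub_div _ _ (two_add_I_ne _) (two_add_I_ne _)]
  congr 1
  ring

lemma gam_one_sub_conj (t u : ℝ) : 1 - (starRingEnd ℂ) (gam t) * gam u =
    (4 + 2 * Complex.I * ((Real.exp u : ℂ) - (Real.exp t : ℂ))) /
      ((2 - Complex.I * (Real.exp t : ℂ)) * (2 + Complex.I * (Real.exp u : ℂ))) := by
  unfold gam
  rw [map_div₀]
  simp only [map_add, map_mul, Complex.conj_I, Complex.conj_ofReal, map_ofNat]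
  have h2 : (2 + -Complex.I * (Real.exp t : ℂ)) = (2 - Complex.I * (Real.exp t : ℂ)) := by ring
  rw [h2, div_mul_div_comm, eq_div_iff (mul_ne_zero (two_sub_I_ne _) (two_add_I_ne _)),
    sub_mul, div_mul_cancel₀ _ (mul_ne_zero (two_sub_I_ne _) (two_add_I_ne _))]
  ring

lemma dD_gam {t u : ℝ} (h : t ≤ u) : dD (gam t) (gam u) =
    arctanh ((Real.exp u - Real.exp t) / Real.sqrt (4 + (Real.exp u - Real.exp t) ^ 2)) := by
  have hEF : Real.exp t ≤ Real.exp u := Real.exp_le_exp.mpr h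
  have hSE : (0:ℝ) < Real.sqrt (4 + Real.exp t ^ 2) := Real.sqrt_pos.mpr (by positivity)
  have hSF : (0:ℝ) < Real.sqrt (4 + Real.exp u ^ 2) := Real.sqrt_pos.mpr (by positivity)
  have hSX : (0:ℝ) < Real.sqrt (4 + (Real.exp u - Real.exp t) ^ 2) :=
    Real.sqrt_pos.mpr (by positivity)
  unfold dD
  rw [gam_sub, gam_one_sub_conj]
  have hc1 : ((Real.exp t : ℂ) - (Real.exp u : ℂ)) = (((Real.exp t - Real.exp u : ℝ)) : ℂ) := by
    push_cast; ring
  have hc2 : (4 + 2 * Complex.I * ((Real.exp u : ℂ) - (Real.exp t : ℂ)))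
      = 2 * (2 + Complex.I * (((Real.exp u - Real.exp t : ℝ)) : ℂ)) := by
    push_cast; ring
  rw [hc1, hc2]
  simp only [norm_div, norm_mul, Complex.norm_two, Complex.norm_I, Complex.norm_real, Real.norm_eq_abs,
    abs_two_add_I, abs_two_sub_I]
  rw [abs_of_nonpos (by linarith : Real.exp t - Real.exp u ≤ 0)]
  congr 1
  field_simp
  ring

lemma arctanh_ratio {X : ℝ} (hX : 0 ≤ X) :
    arctanh (X / Real.sqrt (4 + X ^ 2)) = Real.log ((Real.sqrt (4 + X ^ 2) + X) / 2) := by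
  set S := Real.sqrt (4 + X ^ 2) with hS
  have hS2 : S ^ 2 = 4 + X ^ 2 := Real.sq_sqrt (by positivity)
  have hS0 : 0 < S := Real.sqrt_pos.mpr (by positivity)
  have hXS : X < S := by nlinarith
  unfold arctanh
  have hne : (1:ℝ) - X / S ≠ 0 := by
    have : X / S < 1 := (div_lt_one hS0).mpr hXS
    linarith
  have h1 : (1 + X / S) / (1 - X / S) = ((S + X) / 2) ^ 2 := by
    rw [div_eq_iff hne]
    field_simp
    nlinarith
  rw [h1, Real.log_pow]
  push_cast
  ring

lemma dD_step_lb (t : ℝ) : t ≤ dD (gam t) (gam (t + 1)) := by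
  have h := dD_gam (by linarith : t ≤ t + 1)
  set X : ℝ := Real.exp (t + 1) - Real.exp t with hX
  have hXpos : Real.exp t ≤ X := by
    have h2 : (2:ℝ) ≤ Real.exp 1 := by
      have := Real.add_one_le_exp (1:ℝ); linarith
    have h3 : Real.exp (t + 1) = Real.exp t * Real.exp 1 := by rw [Real.exp_add]
    nlinarith [Real.exp_pos t]
  have hX0 : 0 ≤ X := le_trans (Real.exp_pos t).le hXpos
  rw [h, arctanh_ratio hX0]
  set S := Real.sqrt (4 + X ^ 2) with hS
  have hS2 : S ^ 2 = 4 + X ^ 2 := Real.sq_sqrt (by positivity)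
  have hS0 : 0 < S := Real.sqrt_pos.mpr (by positivity)
  have hSX : X ≤ S := by nlinarith
  calc t = Real.log (Real.exp t) := (Real.log_exp t).symm
    _ ≤ Real.log X := Real.log_le_log (Real.exp_pos t) hXpos
    _ ≤ Real.log ((S + X) / 2) :=
        Real.log_le_log (by nlinarith [Real.exp_pos t]) (by linarith)

lemma dD_orbit_ub {s : ℝ} (hs : 0 ≤ s) :
    0 ≤ dD (gam 0) (gam s) ∧ dD (gam 0) (gam s) ≤ s := by
  have h := dD_gam hs
  set X : ℝ := Real.exp s - Real.exp 0 with hX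
  have hX0 : 0 ≤ X := by
    have := Real.exp_le_exp.mpr hs; simp only [hX]; linarith
  rw [h, arctanh_ratio hX0]
  set S := Real.sqrt (4 + X ^ 2) with hS
  have hS2 : S ^ 2 = 4 + X ^ 2 := Real.sq_sqrt (by positivity)
  have hS0 : 0 < S := Real.sqrt_pos.mpr (by positivity)
  constructor
  · apply Real.log_nonneg
    nlinarith
  · have h1 : (S + X) / 2 ≤ 1 + X := by nlinarith
    calc Real.log ((S + X) / 2) ≤ Real.log (1 + X) :=
          Real.log_le_log (by nlinarith) h1
      _ = Real.log (Real.exp s) := by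
          rw [Real.exp_zero] at hX
          rw [hX]; ring_nf
      _ = s := Real.log_exp s

end Stmt11Aux

/-- Proposition 6.1, first part: there exist a semigroup and a non-regular backward
orbit `γ` with `lim_{s → +∞} d_𝔻(γ(0), γ(s))/s² = 0`. -/
theorem stmt11 : ∃ (φ : ℝ → ℂ → ℂ) (γ : ℝ → ℂ),
    IsSemigroupD φ ∧
    ContinuousOn γ (Set.Ici (0 : ℝ)) ∧
    (∀ t : ℝ, 0 ≤ t → γ t ∈ unitDisc) ∧
    (∀ s t : ℝ, 0 ≤ s → s ≤ t → φ s (γ t) = γ (t - s)) ∧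
    (∀ C : ℝ, ∃ᶠ t in Filter.atTop, C < dD (γ t) (γ (t + 1))) ∧
    Filter.Tendsto (fun s => dD (γ 0) (γ s) / s ^ 2) Filter.atTop (nhds 0) := by
  classical
  refine ⟨Stmt11Aux.phi, Stmt11Aux.gam, ⟨?_, ?_, ?_, ?_, ?_, ?_⟩, ?_, ?_, ?_, ?_, ?_⟩
  · intro t ht z hz
    exact Stmt11Aux.phi_mem ht hz
  · intro t ht
    exact Stmt11Aux.phi_holo ht
  · intro z _
    exact Stmt11Aux.phi_id0 z
  · intro s t hs ht z hz
    exact Stmt11Aux.phi_comp hs ht hz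
  · exact Stmt11Aux.phi_cont0
  · exact ⟨1, one_pos, Stmt11Aux.phi_notBij⟩
  · exact Stmt11Aux.gam_cont.continuousOn
  · intro t _
    exact Stmt11Aux.gam_mem t
  · intro s t hs _
    exact Stmt11Aux.phi_gam hs
  · intro C
    apply Filter.Eventually.frequently
    filter_upwards [eventually_gt_atTop C] with t htC
    exact lt_of_lt_of_le htC (Stmt11Aux.dD_step_lb t)
  · apply squeeze_zero' (g := fun s : ℝ => 1 / s)
    · filter_upwards [eventually_ge_atTop (0:ℝ)] with s hs
      exact div_nonneg (Stmt11Aux.dD_orbit_ub hs).1 (sq_nonneg s)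
    · filter_upwards [eventually_ge_atTop (1:ℝ)] with s hs
      have hs0 : (0:ℝ) < s := by linarith
      have hub := (Stmt11Aux.dD_orbit_ub (by linarith : (0:ℝ) ≤ s)).2
      calc dD (Stmt11Aux.gam 0) (Stmt11Aux.gam s) / s ^ 2 ≤ s / s ^ 2 := by gcongr
        _ = 1 / s := by
            rw [sq]; field_simp
    · simpa using tendsto_inv_atTop_zero
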